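/- Let n ≥ 3, q a prime power, and let B be a nondegenerate Hermitian form on V = F_{q²}^n (Hermitian with respect to x ↦ x^q). For λ ∈ F_q, let O_λ = {v ∈ V∖{0} : B(v,v) = λ}. Then for every fixed λ and every u ∈ V, u can be written as a sum of two vectors in O_λ. In particular, taking G₀ = GU_n(q), every orbital graph of the affine group V⋊G₀ has diameter at most 2. -/
import Mathlib


open Finset Polynomial in
private lemma stmt10_fib {K : Type*} [Field K] [Fintype K] [DecidableEq K] (m : ℕ) (hm : 2 ≤ m)
    (c t : K) : (Finset.univ.filter fun x : K => x ^ m + c * x = t).card ≤ m := by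
  classical
  set P : Polynomial K := X ^ m + C c * X - C t with hP
  have hPne : P ≠ 0 := by
    intro h
    have h2 := congrArg (fun Q : Polynomial K => Q.coeff m) h
    simp [hP, coeff_X_pow, coeff_X, coeff_C, (by omega : ¬ m = 1), (by omega : ¬ m = 0),
      (by omega : ¬ 1 = m)] at h2
    rw [if_neg (by omega : ¬ 1 = m), if_neg (by omega : ¬ m = 0)] at h2
    simp at h2
  have hdeg : P.natDegree ≤ m := by
    apply le_trans (natDegree_sub_le _ _)
    simp only [natDegree_X_pow, natDegree_C, max_le_iff]
    constructor
    · apply le_trans (natDegree_add_le _ _)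
      simp only [natDegree_X_pow, max_le_iff]
      refine ⟨le_rfl, ?_⟩
      apply le_trans (natDegree_mul_le)
      simp only [natDegree_C, natDegree_X]
      omega
    · omega
  have hsub : (Finset.univ.filter fun x : K => x ^ m + c * x = t) ⊆ P.roots.toFinset := by
    intro x hx
    simp only [Finset.mem_filter] at hx
    rw [Multiset.mem_toFinset, mem_roots hPne]
    simp [IsRoot, hP, hx.2, sub_eq_zero]
  calc (Finset.univ.filter fun x : K => x ^ m + c * x = t).card
      ≤ P.roots.toFinset.card := Finset.card_le_card hsub
    _ ≤ Multiset.card P.roots := Multiset.toFinset_card_le _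
    _ ≤ P.natDegree := card_roots' P
    _ ≤ m := hdeg

private lemma stmt10_surj {K : Type*} [Field K] [Fintype K] [DecidableEq K] (q : ℕ) (hq2 : 2 ≤ q)
    (hcard : Fintype.card K = q ^ 2) (f : K → K) (m : ℕ) (hm : 2 ≤ m) (hmq : m ≤ q + 1)
    (hfix : ∀ x, (f x) ^ q = f x)
    (hfib : ∀ t : K, (Finset.univ.filter fun x : K => f x = t).card ≤ m)
    (t : K) (ht : t ^ q = t) : ∃ x, f x = t := by
  classical
  set I := Finset.univ.image f with hI
  have h1 : Fintype.card K ≤ m * I.card := by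
    rw [← Finset.card_univ]
    exact Finset.card_le_mul_card_image Finset.univ m (fun b _ => hfib b)
  have hS : (Finset.univ.filter fun x : K => x ^ q = x).card ≤ q := by
    have h2 := stmt10_fib q hq2 (-1 : K) 0
    have h3 : (Finset.univ.filter fun x : K => x ^ q + (-1) * x = 0)
        = (Finset.univ.filter fun x : K => x ^ q = x) := by
      apply Finset.filter_congr
      intro x _
      constructor
      · intro h; linear_combination h
      · intro h; linear_combination h
    rwa [h3] at h2
  have hqI : q ≤ I.card := by
    by_contra hcon
    push_neg at hcon
    have h4 : m * I.card ≤ (q + 1) * (q - 1) := Nat.mul_le_mul hmq (by omega)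
    rw [hcard] at h1
    nlinarith
  have hIS : I ⊆ Finset.univ.filter fun x : K => x ^ q = x := by
    intro x hx
    obtain ⟨y, _, rfl⟩ := Finset.mem_image.mp hx
    simp [hfix y]
  have heq : I = Finset.univ.filter fun x : K => x ^ q = x :=
    Finset.eq_of_subset_of_card_le hIS (le_trans hS hqI)
  have ht' : t ∈ I := by rw [heq]; simp [ht]
  obtain ⟨x, _, hx⟩ := Finset.mem_image.mp ht'
  exact ⟨x, hx⟩

/-- Let `n ≥ 3`, `q` a prime power, and `B` a nondegenerate Hermitian
form on `V = F_{q²}^n` (Hermitian with respect to `x ↦ x^q`).  For `λ ∈ F_q` let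
`O_λ = {v ∈ V ∖ {0} : B(v,v) = λ}`.  Then for every `λ` fixed by `x ↦ x^q` and every
`u ∈ V`, `u` can be written as a sum of two vectors in `O_λ`. -/
theorem stmt10 (K : Type*) [Field K] [Fintype K] (q : ℕ) (hq : IsPrimePow q)
    (hcard : Fintype.card K = q ^ 2)
    (n : ℕ) (hn : 3 ≤ n)
    (B : (Fin n → K) → (Fin n → K) → K)
    (hadd : ∀ u v w : Fin n → K, B (u + v) w = B u w + B v w)
    (hsmul : ∀ (c : K) (u w : Fin n → K), B (c • u) w = c * B u w)
    (hherm : ∀ u w : Fin n → K, B w u = (B u w) ^ q)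
    (hnd : ∀ v : Fin n → K, (∀ w : Fin n → K, B v w = 0) → v = 0)
    (lam : K) (hlam : lam ^ q = lam) (u : Fin n → K) :
    ∃ v w : Fin n → K, v ≠ 0 ∧ w ≠ 0 ∧ B v v = lam ∧ B w w = lam ∧ u = v + w := by
  classical
  have hq2 : 2 ≤ q := hq.two_le
  have hq0 : q ≠ 0 := by omega
  -- characteristic facts
  obtain ⟨p, k, hpp, hk, hpk⟩ := hq
  have hp' : p.Prime := Nat.prime_iff.mpr hpp
  haveI hfact : Fact p.Prime := ⟨hp'⟩
  have hchar := ringChar.charP K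
  obtain ⟨d, hrp, hKcard⟩ := FiniteField.card K (ringChar K)
  have hpr : ringChar K = p := by
    have h1 : p ^ (2 * k) = ringChar K ^ (d : ℕ) := by
      rw [← hKcard, hcard, ← hpk, ← pow_mul, mul_comm k 2]
    have hdvd : p ∣ ringChar K ^ (d : ℕ) := h1 ▸ dvd_pow_self p (by omega : 2 * k ≠ 0)
    exact ((Nat.prime_dvd_prime_iff_eq hp' hrp).mp (hp'.dvd_of_dvd_pow hdvd)).symm
  haveI hcharp : CharP K p := hpr ▸ hchar
  have hfrob : ∀ x y : K, (x + y) ^ q = x ^ q + y ^ q := by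
    intro x y; rw [← hpk]; exact add_pow_char_pow x y p k
  have hpow : ∀ x : K, (x ^ q) ^ q = x := by
    intro x
    rw [← pow_mul]
    have hqq : q * q = Fintype.card K := by rw [hcard]; ring
    rw [hqq]
    exact FiniteField.pow_card x
  have hfneg : ∀ x : K, (-x) ^ q = -x ^ q := by
    intro x
    have h := hfrob x (-x)
    rw [add_neg_cancel, zero_pow hq0] at h
    linear_combination -h
  have hfsub : ∀ x y : K, (x - y) ^ q = x ^ q - y ^ q := by
    intro x y; rw [sub_eq_add_neg, hfrob, hfneg, ← sub_eq_add_neg]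
  -- trace surjectivity onto F_q
  have htr : ∀ t : K, t ^ q = t → ∃ a : K, a + a ^ q = t := by
    intro t ht
    refine stmt10_surj q hq2 hcard (fun x => x + x ^ q) q hq2 (by omega) ?_ ?_ t ht
    · intro x; show (x + x ^ q) ^ q = x + x ^ q; rw [hfrob, hpow]; ring
    · intro s
      have h2 := stmt10_fib q hq2 (1 : K) s
      have h3 : (Finset.univ.filter fun x : K => x ^ q + 1 * x = s)
          = (Finset.univ.filter fun x : K => x + x ^ q = s) := by
        apply Finset.filter_congr
        intro x _
        constructor
        · intro h; linear_combination h
        · intro h; linear_combination h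
      rwa [h3] at h2
  -- norm surjectivity onto F_q
  have hnorm : ∀ t : K, t ^ q = t → ∃ a : K, a ^ (q + 1) = t := by
    intro t ht
    refine stmt10_surj q hq2 hcard (fun x => x ^ (q + 1)) (q + 1) (by omega) le_rfl ?_ ?_ t ht
    · intro x
      show (x ^ (q + 1)) ^ q = x ^ (q + 1)
      rw [pow_succ, mul_pow, hpow, mul_comm]
    · intro s
      have h2 := stmt10_fib (q + 1) (by omega) (0 : K) s
      have h3 : (Finset.univ.filter fun x : K => x ^ (q + 1) + 0 * x = s)
          = (Finset.univ.filter fun x : K => x ^ (q + 1) = s) := by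
        apply Finset.filter_congr
        intro x _
        rw [zero_mul, add_zero]
      rwa [h3] at h2
  -- existence of an element not fixed by the Frobenius power
  have hexch : ∃ c : K, c ^ q ≠ c := by
    by_contra hcon
    push_neg at hcon
    have h1 := stmt10_fib q hq2 (-1 : K) 0
    have h2 : (Finset.univ.filter fun x : K => x ^ q + (-1) * x = 0) = Finset.univ := by
      apply Finset.filter_true_of_mem
      intro x _
      rw [hcon x]; ring
    rw [h2, Finset.card_univ, hcard] at h1
    nlinarith
  -- sesquilinear toolkit
  have h2add : ∀ x y z : Fin n → K, B x (y + z) = B x y + B x z := by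
    intro x y z; rw [hherm, hadd, hfrob, ← hherm, ← hherm]
  have h2smul : ∀ (c : K) (x y : Fin n → K), B x (c • y) = c ^ q * B x y := by
    intro c x y; rw [hherm, hsmul, mul_pow, ← hherm]
  have hB0 : ∀ y : Fin n → K, B 0 y = 0 := by
    intro y
    have h := hsmul 0 0 y
    rw [zero_smul, zero_mul] at h
    exact h
  have h0B : ∀ y : Fin n → K, B y 0 = 0 := by
    intro y; rw [hherm, hB0, zero_pow hq0]
  have h1sub : ∀ x y z : Fin n → K, B (x - y) z = B x z - B y z := by
    intro x y z
    rw [sub_eq_add_neg, hadd, ← neg_one_smul K y, hsmul]; ring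
  have h2sub : ∀ x y z : Fin n → K, B x (y - z) = B x y - B x z := by
    intro x y z
    rw [hherm, h1sub, hfsub, ← hherm, ← hherm]
  have hfixB : ∀ v : Fin n → K, (B v v) ^ q = B v v := fun v => (hherm v v).symm
  have hex : ∀ v : Fin n → K, v ≠ 0 → ∃ w, B v w ≠ 0 := by
    intro v hv
    by_contra hcon
    push_neg at hcon
    exact hv (hnd v hcon)
  have hvne : ∀ v w : Fin n → K, B v w ≠ 0 → v ≠ 0 := by
    intro v w h hv; rw [hv, hB0] at h; exact h rfl
  have hexp2 : ∀ x y : Fin n → K, B (x + y) (x + y) = B x x + B x y + B y x + B y y := by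
    intro x y; rw [hadd, h2add, h2add]; ring
  have hexpm0 : ∀ (dd : K) (z w : Fin n → K), B (z + dd • w) (z + dd • w)
      = B z z + dd ^ q * B z w + dd * B w z + dd * (dd ^ q * B w w) := by
    intro dd z w; simp only [hexp2, hsmul, h2smul]
  have hexpm1 : ∀ (a : K) (x y : Fin n → K), B (a • x + y) (a • x + y)
      = a * (a ^ q * B x x) + a * B x y + a ^ q * B y x + B y y := by
    intro a x y; simp only [hexp2, hsmul, h2smul]
  have hexpm2 : ∀ (a b : K) (x y : Fin n → K), B (a • x + b • y) (a • x + b • y)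
      = a * (a ^ q * B x x) + a * (b ^ q * B x y) + b * (a ^ q * B y x) + b * (b ^ q * B y y) := by
    intro a b x y; simp only [hexp2, hsmul, h2smul]
  -- combining two isotropic vectors pairing nontrivially into a norm-one vector
  have hcomb : ∀ z w : Fin n → K, B z z = 0 → B w w = 0 → B z w ≠ 0 →
      ∃ dd : K, B (z + dd • w) (z + dd • w) = 1 := by
    intro z w hz hw hc
    obtain ⟨s, hs⟩ := htr 1 (one_pow q)
    refine ⟨(s / B z w) ^ q, ?_⟩
    rw [hexpm0, hz, hw]
    simp only [mul_zero, add_zero, zero_add]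
    rw [hpow, hherm z w]
    have h4 : (s / B z w) ^ q * B z w ^ q = s ^ q := by rw [← mul_pow, div_mul_cancel₀ _ hc]
    rw [h4, div_mul_cancel₀ _ hc]
    exact hs
  -- existence of an anisotropic vector
  have hani : ∃ v0 : Fin n → K, B v0 v0 ≠ 0 := by
    set e : Fin n → K := Pi.single ⟨0, by omega⟩ 1 with hedef
    have he : e ≠ 0 := by
      intro h
      have h2 := congrFun h ⟨0, by omega⟩
      rw [hedef, Pi.single_eq_same] at h2
      exact one_ne_zero h2
    obtain ⟨w, hw⟩ := hex e he
    by_cases h1 : B e e = 0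
    · by_cases h2 : B w w = 0
      · obtain ⟨dd, hd⟩ := hcomb e w h1 h2 hw
        exact ⟨_, by rw [hd]; exact one_ne_zero⟩
      · exact ⟨w, h2⟩
    · exact ⟨e, h1⟩
  -- orthogonal projection away from an anisotropic vector
  have hproj : ∀ u0 w : Fin n → K, B u0 u0 ≠ 0 → B (w - (B w u0 / B u0 u0) • u0) u0 = 0 := by
    intro u0 w hm
    rw [h1sub, hsmul, div_mul_cancel₀ _ hm, sub_self]
  -- nonzero vector orthogonal to an anisotropic vector
  have hperpne : ∀ u0 : Fin n → K, B u0 u0 ≠ 0 → ∃ z, B z u0 = 0 ∧ z ≠ 0 := by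
    intro u0 hm
    set i0 : Fin n := ⟨0, by omega⟩ with hi0
    set i1 : Fin n := ⟨1, by omega⟩ with hi1
    have hi : i1 ≠ i0 := by simp [hi0, hi1, Fin.ext_iff]
    set e0 : Fin n → K := Pi.single i0 1 with he0
    set e1 : Fin n → K := Pi.single i1 1 with he1
    by_cases h0 : e0 - (B e0 u0 / B u0 u0) • u0 = 0
    · by_cases h1 : e1 - (B e1 u0 / B u0 u0) • u0 = 0
      · exfalso
        rw [sub_eq_zero] at h0 h1
        have h00 : (1 : K) = B e0 u0 / B u0 u0 * u0 i0 := by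
          have h2 := congrFun h0 i0
          rwa [he0, Pi.single_eq_same, Pi.smul_apply, smul_eq_mul] at h2
        have h01 : (0 : K) = B e0 u0 / B u0 u0 * u0 i1 := by
          have h2 := congrFun h0 i1
          rwa [he0, Pi.single_eq_of_ne hi, Pi.smul_apply, smul_eq_mul] at h2
        have h11 : (1 : K) = B e1 u0 / B u0 u0 * u0 i1 := by
          have h2 := congrFun h1 i1
          rwa [he1, Pi.single_eq_same, Pi.smul_apply, smul_eq_mul] at h2
        have hc0 : B e0 u0 / B u0 u0 ≠ 0 := by
          intro h; rw [h, zero_mul] at h00; exact one_ne_zero h00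
        have hu01 : u0 i1 = 0 := by
          rcases mul_eq_zero.mp h01.symm with h | h
          · exact absurd h hc0
          · exact h
        rw [hu01, mul_zero] at h11
        exact one_ne_zero h11
      · exact ⟨_, hproj u0 e1 hm, h1⟩
    · exact ⟨_, hproj u0 e0 hm, h0⟩
  -- anisotropic vector orthogonal to an anisotropic vector
  have haniperp : ∀ u0 : Fin n → K, B u0 u0 ≠ 0 → ∃ z, B z u0 = 0 ∧ B z z ≠ 0 := by
    intro u0 hm
    obtain ⟨z1, hz1p, hz1⟩ := hperpne u0 hm
    by_cases h1 : B z1 z1 = 0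
    · obtain ⟨w', hw'⟩ := hex z1 hz1
      have hwp : B (w' - (B w' u0 / B u0 u0) • u0) u0 = 0 := hproj u0 w' hm
      set w : Fin n → K := w' - (B w' u0 / B u0 u0) • u0 with hwdef
      have hzw : B z1 w ≠ 0 := by
        rw [hwdef, h2sub, h2smul, hz1p, mul_zero, sub_zero]
        exact hw'
      by_cases h2 : B w w = 0
      · obtain ⟨dd, hd⟩ := hcomb z1 w h1 h2 hzw
        refine ⟨z1 + dd • w, ?_, by rw [hd]; exact one_ne_zero⟩
        rw [hadd, hsmul, hz1p, hwp, mul_zero, add_zero]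
      · exact ⟨w, hwp, h2⟩
    · exact ⟨z1, hz1p, h1⟩
  -- existence of a nonzero vector of any prescribed F_q-norm
  have hnvec : ∀ t : K, t ^ q = t → ∃ v, v ≠ 0 ∧ B v v = t := by
    intro t ht
    obtain ⟨v0, hα⟩ := hani
    have hαfix : (B v0 v0) ^ q = B v0 v0 := hfixB v0
    by_cases ht0 : t = 0
    · subst ht0
      obtain ⟨z1, hz1p, hz1⟩ := hperpne v0 hα
      by_cases hz : B z1 z1 = 0
      · exact ⟨z1, hz1, hz⟩
      · obtain ⟨a, ha⟩ := hnorm (-B z1 z1 / B v0 v0) (by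
          rw [div_pow, hfneg, hfixB, hαfix])
        have hv0z : B v0 z1 = 0 := by rw [hherm z1 v0, hz1p, zero_pow hq0]
        refine ⟨a • v0 + z1, ?_, ?_⟩
        · intro h
          have h2 : B (a • v0 + z1) z1 = 0 := by rw [h, hB0]
          rw [hadd, hsmul, hv0z, mul_zero, zero_add] at h2
          exact hz h2
        · rw [hexpm1, hv0z, hz1p, mul_zero, mul_zero]
          have h3 : a * (a ^ q * B v0 v0) = a ^ (q + 1) * B v0 v0 := by rw [pow_succ]; ring
          rw [h3, ha, div_mul_cancel₀ _ hα]
          ring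
    · obtain ⟨a, ha⟩ := hnorm (t / B v0 v0) (by rw [div_pow, ht, hαfix])
      have hta : t / B v0 v0 ≠ 0 := div_ne_zero ht0 hα
      have ha0 : a ≠ 0 := by
        intro h
        rw [h, zero_pow (by omega : q + 1 ≠ 0)] at ha
        exact hta ha.symm
      refine ⟨a • v0, smul_ne_zero ha0 (hvne v0 v0 hα), ?_⟩
      rw [hsmul, h2smul]
      have h3 : a * (a ^ q * B v0 v0) = a ^ (q + 1) * B v0 v0 := by rw [pow_succ]; ring
      rw [h3, ha, div_mul_cancel₀ _ hα]
  -- main case analysis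
  by_cases hu : u = 0
  · obtain ⟨v, hv0, hvv⟩ := hnvec lam hlam
    refine ⟨v, -v, hv0, neg_ne_zero.mpr hv0, hvv, ?_, by rw [hu, add_neg_cancel]⟩
    have h1 : B (-v) (-v) = B v v := by
      rw [← neg_one_smul K v, hsmul, h2smul, hfneg, one_pow]
      ring
    rw [h1, hvv]
  · by_cases hμ : B u u = 0
    · -- isotropic case: build a hyperbolic partner f for u
      obtain ⟨f', hc⟩ := hex u hu
      set c := B u f' with hcdef
      set f'' : Fin n → K := (c⁻¹ ^ q) • f' with hf''def
      have hBuf'' : B u f'' = 1 := by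
        rw [hf''def, h2smul, ← hcdef, hpow, inv_mul_cancel₀ hc]
      have hBf''u : B f'' u = 1 := by rw [hherm u f'', hBuf'', one_pow]
      have hβfix : (B f'' f'') ^ q = B f'' f'' := hfixB f''
      obtain ⟨s, hs⟩ := htr (-B f'' f'') (by rw [hfneg, hβfix])
      set f : Fin n → K := f'' + s • u with hfdef
      have hBuf : B u f = 1 := by
        rw [hfdef, h2add, hBuf'', h2smul, hμ, mul_zero, add_zero]
      have hBfu : B f u = 1 := by rw [hherm u f, hBuf, one_pow]
      have hBff : B f f = 0 := by
        rw [hfdef, hexpm0, hBuf'', hBf''u, hμ]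
        linear_combination hs
      obtain ⟨c', hc'⟩ := hexch
      set b := c' - c' ^ q with hbdef
      have hb : b ≠ 0 := sub_ne_zero.mpr (Ne.symm hc')
      have hbq : b ^ q = c' ^ q - c' := by rw [hbdef, hfsub, hpow]
      have hbtr : b + b ^ q = 0 := by rw [hbq, hbdef]; ring
      have hbqne : b ^ q ≠ 0 := pow_ne_zero q hb
      obtain ⟨s', hs'⟩ := htr lam hlam
      set a := s' / b ^ q with hadef
      set v : Fin n → K := a • u + b • f with hvdef
      have hBvu : B v u = b := by
        rw [hvdef, hadd, hsmul, hsmul, hμ, hBfu, mul_zero, mul_one, zero_add]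
      have hvne0 : v ≠ 0 := by
        intro h; rw [h, hB0] at hBvu; exact hb hBvu.symm
      have hBvv : B v v = lam := by
        have e := hexpm2 a b u f
        rw [hμ, hBff, hBuf, hBfu] at e
        have h5 : a * b ^ q = s' := by rw [hadef]; exact div_mul_cancel₀ _ hbqne
        have h6 : a ^ q * b = s' ^ q := by
          rw [hadef, div_pow, hpow]
          exact div_mul_cancel₀ _ hb
        rw [hvdef, e]
        linear_combination h5 + h6 + hs'
      refine ⟨v, u - v, hvne0, ?_, hBvv, ?_, by abel⟩
      · intro h
        have h2 : B (u - v) u = 0 := by rw [h, hB0]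
        rw [h1sub, hμ, hBvu, zero_sub, neg_eq_zero] at h2
        exact hb h2
      · have hBuv : B u v = b ^ q := by rw [hherm v u, hBvu]
        rw [h1sub, h2sub, h2sub, hμ, hBuv, hBvu, hBvv]
        linear_combination -hbtr
    · -- anisotropic case
      obtain ⟨a, ha⟩ := htr 1 (one_pow q)
      have ha0 : a ≠ 0 := by
        intro h; rw [h, zero_pow hq0, add_zero] at ha; exact one_ne_zero ha.symm
      have ha1 : a ≠ 1 := by
        intro h
        rw [h, one_pow] at ha
        exact one_ne_zero (by linear_combination ha)
      have hτfix : (lam - a ^ q * a * B u u) ^ q = lam - a ^ q * a * B u u := by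
        rw [hfsub, hlam, mul_pow, mul_pow, hpow, hfixB]
        ring
      set τ : K := lam - a ^ q * a * B u u with hτdef
      have hzex : ∃ z, B z u = 0 ∧ B z z = τ := by
        by_cases hτ : τ = 0
        · exact ⟨0, hB0 u, by rw [hB0, hτ]⟩
        · obtain ⟨z0, hz0u, hz0z⟩ := haniperp u hμ
          have hγfix : (B z0 z0) ^ q = B z0 z0 := hfixB z0
          obtain ⟨cc, hcc⟩ := hnorm (τ / B z0 z0) (by rw [div_pow, hτfix, hγfix])
          refine ⟨cc • z0, ?_, ?_⟩
          · rw [hsmul, hz0u, mul_zero]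
          · rw [hsmul, h2smul]
            have h3 : cc * (cc ^ q * B z0 z0) = cc ^ (q + 1) * B z0 z0 := by rw [pow_succ]; ring
            rw [h3, hcc, div_mul_cancel₀ _ hz0z]
      obtain ⟨z, hzu, hzz⟩ := hzex
      set v : Fin n → K := a • u + z with hvdef
      have hBuz : B u z = 0 := by rw [hherm z u, hzu, zero_pow hq0]
      have hBvu : B v u = a * B u u := by
        rw [hvdef, hadd, hsmul, hzu, add_zero]
      have hvne0 : v ≠ 0 := by
        intro h
        rw [h, hB0] at hBvu
        rcases mul_eq_zero.mp hBvu.symm with h4 | h4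
        · exact ha0 h4
        · exact hμ h4
      have hBvv : B v v = lam := by
        have e := hexpm1 a u z
        rw [hBuz, hzu, hzz, mul_zero, mul_zero] at e
        rw [hvdef, e, hτdef]
        ring
      refine ⟨v, u - v, hvne0, ?_, hBvv, ?_, by abel⟩
      · intro h
        have h2 : B (u - v) u = 0 := by rw [h, hB0]
        rw [h1sub, hBvu] at h2
        have h3 : (1 - a) * B u u = 0 := by linear_combination h2
        rcases mul_eq_zero.mp h3 with h4 | h4
        · exact ha1 (by linear_combination -h4)
        · exact hμ h4
      · have hBuv : B u v = a ^ q * B u u := by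
          rw [hherm v u, hBvu, mul_pow, hfixB]
        rw [h1sub, h2sub, h2sub, hBuv, hBvu, hBvv]
        linear_combination -(B u u) * ha
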